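/- arXiv:1612.04838 — 3 statements merged into one kernel-verified Lean document; each statement's English description precedes it below -/
import Mathlib

section
/- Let 0 = y_0 ≤ y_1 ≤ ... ≤ y_n with y_0 = 0, let D = ∑_{i=1}^n (1/i)(y_i - y_{i-1}) > 0, and let α ∈ (0,1). If G : [0,1] → ℝ is nondecreasing with G(0) = 0 and critical values 0 = c_0 ≤ c_1 ≤ ... ≤ c_n satisfy G(c_i) ≤ (α/D)·y_i for all i, then ∑_{i=1}^{n} (1/i)(G(c_i) - G(c_{i-1})) ≤ α. -/
lemma abel_le_aux (a g h : ℕ → ℝ) (h00 : g 0 = h 0) :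
    ∀ n : ℕ, (∀ i ≤ n, g i ≤ h i) → (∀ i, 1 ≤ i → i < n → a (i + 1) ≤ a i) →
      ∑ i ∈ Finset.Icc 1 n, a i * (g i - g (i - 1)) + a n * (h n - g n) ≤
        ∑ i ∈ Finset.Icc 1 n, a i * (h i - h (i - 1)) := by
  intro n
  induction n with
  | zero => intro _ _; simp [h00]
  | succ m ih =>
    intro hgh ha
    have hIH := ih (fun i hi => hgh i (le_trans hi (Nat.le_succ m)))
      (fun i h1 h2 => ha i h1 (Nat.lt_succ_of_lt h2))
    rw [Finset.sum_Icc_succ_top (Nat.le_add_left 1 m),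
        Finset.sum_Icc_succ_top (Nat.le_add_left 1 m)]
    simp only [Nat.add_sub_cancel]
    -- goal: S_m + a(m+1)(g(m+1)-g m) + a(m+1)(h(m+1)-g(m+1)) ≤ T_m + a(m+1)(h(m+1)-h m)
    have key : a (m + 1) * (g (m + 1) - g m) + a (m + 1) * (h (m + 1) - g (m + 1)) ≤
        a m * (h m - g m) + a (m + 1) * (h (m + 1) - h m) := by
      have hle : (a (m + 1) - a m) * (h m - g m) ≤ 0 := by
        rcases Nat.eq_zero_or_pos m with hm | hm
        · subst hm; simp [h00]
        · have := ha m hm (Nat.lt_succ_self m)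
          have := hgh m (Nat.le_succ m)
          nlinarith
      nlinarith
    linarith
lemma abel_le (a g h : ℕ → ℝ) (h00 : g 0 = h 0) (n : ℕ)
    (hgh : ∀ i ≤ n, g i ≤ h i) (ha : ∀ i, 1 ≤ i → i < n → a (i + 1) ≤ a i)
    (han : 0 ≤ a n) :
    ∑ i ∈ Finset.Icc 1 n, a i * (g i - g (i - 1)) ≤
      ∑ i ∈ Finset.Icc 1 n, a i * (h i - h (i - 1)) := by
  have := abel_le_aux a g h h00 n hgh ha
  have : 0 ≤ a n * (h n - g n) := mul_nonneg han (by linarith [hgh n le_rfl])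
  linarith [abel_le_aux a g h h00 n hgh ha]

/-- Deterministic core of Corollary 2(a): if `D = ∑_{i=1}^n (1/i)(y i - y (i-1)) > 0`,
`α ∈ (0,1)`, `G` is nondecreasing on `[0,1]` with `G 0 = 0`, and the critical values
satisfy `G (c i) ≤ (α/D) * y i`, then `∑_{i=1}^n (1/i)(G (c i) - G (c (i-1))) ≤ α`. -/
theorem fdr_bound_le_alpha (n : ℕ) (hn : 1 ≤ n)
    (y : ℕ → ℝ) (hy0 : y 0 = 0) (hymono : ∀ i < n, y i ≤ y (i + 1))
    (hD : 0 < ∑ i ∈ Finset.Icc 1 n, (1 / (i : ℝ)) * (y i - y (i - 1)))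
    (α : ℝ) (hα : α ∈ Set.Ioo (0 : ℝ) 1)
    (G : ℝ → ℝ) (hG : MonotoneOn G (Set.Icc 0 1)) (hG0 : G 0 = 0)
    (c : ℕ → ℝ) (hc0 : c 0 = 0) (hcmono : ∀ i < n, c i ≤ c (i + 1))
    (hcmem : ∀ i ≤ n, c i ∈ Set.Icc (0 : ℝ) 1)
    (hbound : ∀ i ≤ n, G (c i) ≤
      (α / (∑ i ∈ Finset.Icc 1 n, (1 / (i : ℝ)) * (y i - y (i - 1)))) * y i) :
    ∑ i ∈ Finset.Icc 1 n, (1 / (i : ℝ)) * (G (c i) - G (c (i - 1))) ≤ α := by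
  set D := ∑ i ∈ Finset.Icc 1 n, (1 / (i : ℝ)) * (y i - y (i - 1)) with hDdef
  set β := α / D with hβ
  have hmain := abel_le (fun i => 1 / (i : ℝ)) (fun i => G (c i)) (fun i => β * y i)
    (by simp [hc0, hG0, hy0]) n hbound
    (fun i h1 h2 => by
      have : (0:ℝ) < i := by exact_mod_cast h1
      apply one_div_le_one_div_of_le this (by push_cast; linarith))
    (by positivity)
  refine le_trans hmain ?_
  have : ∑ i ∈ Finset.Icc 1 n, (1 / (i : ℝ)) * (β * y i - β * y (i - 1)) = β * D := by
    rw [hDdef, Finset.mul_sum]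
    apply Finset.sum_congr rfl
    intro i _; ring
  rw [this, hβ, div_mul_cancel₀]
  exact ne_of_gt hD
end

section
/- If G(x) ≤ n·x for all x ∈ [0,1] and critical values are defined by the Benjamini-Yekutieli rule c_i^{BY} = iα/(n·D_BY) with D_BY = ∑_{k=1}^n 1/k, then any nondecreasing sequence c ∈ [0,1]^n maximal with respect to the constraint G(c_i) ≤ iα/D_BY satisfies c_i ≥ c_i^{BY} for all i. -/
/-- If `G x ≤ n x` on `[0,1]` and the critical values `c i` are maximal with respect
to the constraint `G (c i) ≤ i α / D_BY` (i.e. `c i = sSup {x ∈ [0,1] | G x ≤ i α / D_BY}`),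
then `c i ≥ i α / (n D_BY)`, the classical Benjamini-Yekutieli critical value. -/
theorem discrete_BY_dominates_BY (n : ℕ) (hn : 1 ≤ n)
    (G : ℝ → ℝ) (hGmono : MonotoneOn G (Set.Icc 0 1))
    (hGdom : ∀ x ∈ Set.Icc (0 : ℝ) 1, G x ≤ (n : ℝ) * x)
    (α : ℝ) (hα : α ∈ Set.Ioo (0 : ℝ) 1)
    (c : ℕ → ℝ)
    (hc : ∀ i ∈ Finset.Icc 1 n, c i =
      sSup {x ∈ Set.Icc (0 : ℝ) 1 |
        G x ≤ (i : ℝ) * α / (∑ k ∈ Finset.Icc 1 n, 1 / (k : ℝ))}) :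
    ∀ i ∈ Finset.Icc 1 n,
      (i : ℝ) * α / ((n : ℝ) * (∑ k ∈ Finset.Icc 1 n, 1 / (k : ℝ))) ≤ c i := by
  intro i hi
  set D : ℝ := ∑ k ∈ Finset.Icc 1 n, 1 / (k : ℝ) with hD
  have hmem := Finset.mem_Icc.mp hi
  have hi1 : 1 ≤ i := hmem.1
  have hin : i ≤ n := hmem.2
  have hD1 : (1 : ℝ) ≤ D := by
    have h1 : (1 : ℕ) ∈ Finset.Icc 1 n := Finset.mem_Icc.mpr ⟨le_refl 1, hn⟩
    calc (1 : ℝ) = 1 / ((1 : ℕ) : ℝ) := by norm_num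
    _ ≤ D := Finset.single_le_sum (f := fun k : ℕ => 1 / (k : ℝ))
        (fun k _ => by positivity) h1
  have hDpos : (0 : ℝ) < D := lt_of_lt_of_le one_pos hD1
  have hnpos : (0 : ℝ) < (n : ℝ) := by exact_mod_cast hn
  have hipos : (0 : ℝ) < (i : ℝ) := by exact_mod_cast hi1
  set x₀ : ℝ := (i : ℝ) * α / ((n : ℝ) * D) with hx₀
  have hx₀pos : 0 < x₀ := by
    apply div_pos (mul_pos hipos hα.1) (mul_pos hnpos hDpos)
  have hx₀le1 : x₀ ≤ 1 := by
    rw [hx₀, div_le_one (mul_pos hnpos hDpos)]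
    calc (i : ℝ) * α ≤ (n : ℝ) * 1 := by
          apply mul_le_mul (by exact_mod_cast hin) hα.2.le hα.1.le hnpos.le
    _ ≤ (n : ℝ) * D := by nlinarith
  have hx₀Icc : x₀ ∈ Set.Icc (0 : ℝ) 1 := ⟨hx₀pos.le, hx₀le1⟩
  have hGx₀ : G x₀ ≤ (i : ℝ) * α / D := by
    calc G x₀ ≤ (n : ℝ) * x₀ := hGdom x₀ hx₀Icc
    _ = (i : ℝ) * α / D := by
        rw [hx₀]; field_simp
  rw [hc i hi]
  apply le_csSup
  · exact ⟨1, fun x hx => hx.1.2⟩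
  · exact ⟨hx₀Icc, hGx₀⟩
end

section
/- Consider n = 4 independent p-values with null distributions P_1 = 0.05·δ_{0.05} + 0.95·δ_1, P_2 = 0.025·δ_{0.10} + 0.975·δ_1, P_3 = 0.025·δ_{0.15} + 0.975·δ_1, P_4 = δ_1. Under the complete null, the probability that at least one of the events {G(PV_(j)) ≤ j·α for some j} occurs with α = 0.05 and the Heyse adjusted p-values (i.e., the probability that the DBH procedure makes at least one rejection) equals 0.05059375 > 0.05. -/
/-- CDF of `P₁ = 0.05·δ_{0.05} + 0.95·δ_1`. -/
noncomputable def F₁ (x : ℝ) : ℝ := if x < 0.05 then 0 else if x < 1 then 0.05 else 1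
/-- CDF of `P₂ = 0.025·δ_{0.10} + 0.975·δ_1`. -/
noncomputable def F₂ (x : ℝ) : ℝ := if x < 0.10 then 0 else if x < 1 then 0.025 else 1
/-- CDF of `P₃ = 0.025·δ_{0.15} + 0.975·δ_1`. -/
noncomputable def F₃ (x : ℝ) : ℝ := if x < 0.15 then 0 else if x < 1 then 0.025 else 1
/-- CDF of `P₄ = δ_1`. -/
noncomputable def F₄ (x : ℝ) : ℝ := if x < 1 then 0 else 1

/-- `G = F₁ + F₂ + F₃ + F₄`, the sum of the four null CDFs. -/
noncomputable def Gsum (x : ℝ) : ℝ := F₁ x + F₂ x + F₃ x + F₄ x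

/-- The realized p-values `(PV₁, PV₂, PV₃, PV₄)` for an outcome
`ω : Bool × Bool × Bool` (`true` = the small atom is realized; `PV₄ ≡ 1`). -/
noncomputable def pvList (ω : Bool × Bool × Bool) : List ℝ :=
  [if ω.1 then 0.05 else 1, if ω.2.1 then 0.10 else 1, if ω.2.2 then 0.15 else 1, 1]

/-- The `j`-th sorted p-value `PV_(j)` (1-indexed). -/
noncomputable def sortedPV (ω : Bool × Bool × Bool) (j : ℕ) : ℝ :=
  ((pvList ω : Multiset ℝ).sort (· ≤ ·)).getD (j - 1) 0

/-- The joint probability of the outcome `ω` under independence. -/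
noncomputable def weight (ω : Bool × Bool × Bool) : ℝ :=
  (if ω.1 then (0.05 : ℝ) else 0.95) * (if ω.2.1 then (0.025 : ℝ) else 0.975) *
    (if ω.2.2 then (0.025 : ℝ) else 0.975)

/-- The DBH (Heyse) procedure rejects at least one hypothesis at level `α = 0.05`:
`G (PV_(j)) ≤ j·α` for some `j`. -/
def rejectsSome (ω : Bool × Bool × Bool) : Prop :=
  ∃ j ∈ Finset.Icc 1 4, Gsum (sortedPV ω j) ≤ (j : ℝ) * 0.05

lemma sort_eq_aux {l L : List ℝ} (h : l.Perm L) (hL : L.Pairwise (· ≤ ·)) :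
    (l : Multiset ℝ).sort (· ≤ ·) = L :=
  List.Perm.eq_of_pairwise'
    (Multiset.pairwise_sort _ _) hL
    ((Multiset.coe_eq_coe.mp (Multiset.sort_eq _ _)).trans h)

lemma s_ttt : ((pvList (true, true, true) : Multiset ℝ).sort (· ≤ ·))
    = [0.05, 0.10, 0.15, 1] := by
  apply sort_eq_aux (by rfl)
  norm_num [List.Pairwise, List.pairwise_cons]

lemma s_ttf : ((pvList (true, true, false) : Multiset ℝ).sort (· ≤ ·))
    = [0.05, 0.10, 1, 1] := by
  apply sort_eq_aux (by rfl)
  norm_num [List.Pairwise, List.pairwise_cons]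

lemma s_tft : ((pvList (true, false, true) : Multiset ℝ).sort (· ≤ ·))
    = [0.05, 0.15, 1, 1] := by
  apply sort_eq_aux (List.Perm.cons _ (List.Perm.swap _ _ _))
  norm_num [List.Pairwise, List.pairwise_cons]

lemma s_tff : ((pvList (true, false, false) : Multiset ℝ).sort (· ≤ ·))
    = [0.05, 1, 1, 1] := by
  apply sort_eq_aux (by rfl)
  norm_num [List.Pairwise, List.pairwise_cons]

lemma s_ftt : ((pvList (false, true, true) : Multiset ℝ).sort (· ≤ ·))
    = [0.10, 0.15, 1, 1] := by
  apply sort_eq_aux ((List.Perm.swap _ _ _).trans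
    (List.Perm.cons _ (List.Perm.swap _ _ _)))
  norm_num [List.Pairwise, List.pairwise_cons]

lemma s_ftf : ((pvList (false, true, false) : Multiset ℝ).sort (· ≤ ·))
    = [0.10, 1, 1, 1] := by
  apply sort_eq_aux (List.Perm.swap _ _ _)
  norm_num [List.Pairwise, List.pairwise_cons]

lemma s_fft : ((pvList (false, false, true) : Multiset ℝ).sort (· ≤ ·))
    = [0.15, 1, 1, 1] := by
  apply sort_eq_aux ((List.Perm.cons _ (List.Perm.swap _ _ _)).trans
    (List.Perm.swap _ _ _))
  norm_num [List.Pairwise, List.pairwise_cons]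

lemma s_fff : ((pvList (false, false, false) : Multiset ℝ).sort (· ≤ ·))
    = [1, 1, 1, 1] := by
  apply sort_eq_aux (by rfl)
  norm_num [List.Pairwise, List.pairwise_cons]

lemma r_ttt : rejectsSome (true, true, true) :=
  ⟨1, by norm_num, by simp only [sortedPV, s_ttt]; norm_num [List.getD, Gsum, F₁, F₂, F₃, F₄]⟩
lemma r_ttf : rejectsSome (true, true, false) :=
  ⟨1, by norm_num, by simp only [sortedPV, s_ttf]; norm_num [List.getD, Gsum, F₁, F₂, F₃, F₄]⟩
lemma r_tft : rejectsSome (true, false, true) :=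
  ⟨1, by norm_num, by simp only [sortedPV, s_tft]; norm_num [List.getD, Gsum, F₁, F₂, F₃, F₄]⟩
lemma r_tff : rejectsSome (true, false, false) :=
  ⟨1, by norm_num, by simp only [sortedPV, s_tff]; norm_num [List.getD, Gsum, F₁, F₂, F₃, F₄]⟩
lemma r_ftt : rejectsSome (false, true, true) :=
  ⟨2, by norm_num, by simp only [sortedPV, s_ftt]; norm_num [List.getD, Gsum, F₁, F₂, F₃, F₄]⟩

lemma nr_ftf : ¬ rejectsSome (false, true, false) := by
  rintro ⟨j, hj, h⟩
  simp only [Finset.mem_Icc] at hj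
  obtain ⟨h1, h2⟩ := hj
  simp only [sortedPV, s_ftf] at h
  interval_cases j <;>
    norm_num [List.getD, Gsum, F₁, F₂, F₃, F₄] at h

lemma nr_fft : ¬ rejectsSome (false, false, true) := by
  rintro ⟨j, hj, h⟩
  simp only [Finset.mem_Icc] at hj
  obtain ⟨h1, h2⟩ := hj
  simp only [sortedPV, s_fft] at h
  interval_cases j <;>
    norm_num [List.getD, Gsum, F₁, F₂, F₃, F₄] at h

lemma nr_fff : ¬ rejectsSome (false, false, false) := by
  rintro ⟨j, hj, h⟩
  simp only [Finset.mem_Icc] at hj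
  obtain ⟨h1, h2⟩ := hj
  simp only [sortedPV, s_fff] at h
  interval_cases j <;>
    norm_num [List.getD, Gsum, F₁, F₂, F₃, F₄] at h

open Classical in
/-- Under the complete null, the probability that the Heyse DBH procedure at level
`α = 0.05` makes at least one rejection equals `0.05059375 > 0.05`. -/
theorem heyse_counterexample :
    (∑ ω : Bool × Bool × Bool, if rejectsSome ω then weight ω else 0) = 0.05059375 ∧
      (0.05 : ℝ) < 0.05059375 := by
  constructor
  · rw [Fintype.sum_prod_type]
    simp only [Fintype.sum_prod_type, Fintype.sum_bool]
    rw [if_pos r_ttt, if_pos r_ttf, if_pos r_tft, if_pos r_tff, if_pos r_ftt,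
      if_neg nr_ftf, if_neg nr_fft, if_neg nr_fff]
    norm_num [weight]
  · norm_num
end
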